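/- Let n ≥ 1, θ ∈ (1/2, 1], and let Ω ⊂ ℝ^n be a bounded open set. Then there exists a constant C, depending only on n, θ and Ω, such that for every index i ∈ {1, …, n}, all f, w ∈ C¹(Ω̄) and every φ ∈ C¹_c(Ω), |∫_Ω ∂_i f(x) w(x) φ(x) dx| ≤ C ‖f‖_{C^{0,θ}} ‖w‖_{C^{0,θ}} ‖φ‖_{C^{0,θ}}. In particular, the bound is independent of the derivatives of f, w and φ. -/

import Mathlib

open MeasureTheory Filter Topology Metric
open Pointwise

noncomputable section

lemma rpow_subadd' {a b θ : ℝ} (ha : 0 ≤ a) (hb : 0 ≤ b) (hθ0 : 0 ≤ θ) (hθ1 : θ ≤ 1) :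
    (a + b) ^ θ ≤ a ^ θ + b ^ θ := by
  have h := NNReal.rpow_add_le_add_rpow a.toNNReal b.toNNReal hθ0 hθ1
  have h2 := NNReal.coe_le_coe.2 h
  push_cast [NNReal.coe_rpow] at h2
  rwa [Real.coe_toNNReal a ha, Real.coe_toNNReal b hb] at h2

lemma exists_holder_extension {n : ℕ} (Ω : Set (EuclideanSpace ℝ (Fin n))) (hne : Ω.Nonempty)
    {θ : ℝ} (hθ0 : 0 < θ) (hθ1 : θ ≤ 1) (f : EuclideanSpace ℝ (Fin n) → ℝ) {A L : ℝ}
    (hA : 0 ≤ A) (hL : 0 ≤ L)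
    (hfA : ∀ x ∈ Ω, |f x| ≤ A)
    (hfL : ∀ x ∈ Ω, ∀ y ∈ Ω, |f x - f y| ≤ L * ‖x - y‖ ^ θ) :
    ∃ g : EuclideanSpace ℝ (Fin n) → ℝ, Continuous g ∧ (∀ x, |g x| ≤ A) ∧
      (∀ x y, |g x - g y| ≤ L * ‖x - y‖ ^ θ) ∧ (∀ x ∈ Ω, g x = f x) := by
  obtain ⟨x₀, hx₀⟩ := hne
  have hne' : Nonempty Ω := ⟨⟨x₀, hx₀⟩⟩
  set g0 : EuclideanSpace ℝ (Fin n) → ℝ :=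
    fun x => ⨅ y : Ω, (f y + L * ‖x - (y : EuclideanSpace ℝ (Fin n))‖ ^ θ) with hg0
  have hbdd : ∀ x, BddBelow (Set.range fun y : Ω =>
      f y + L * ‖x - (y : EuclideanSpace ℝ (Fin n))‖ ^ θ) := by
    intro x
    refine ⟨-A, ?_⟩
    rintro _ ⟨y, rfl⟩
    show -A ≤ f y + L * ‖x - (y : EuclideanSpace ℝ (Fin n))‖ ^ θ
    have h1 : -A ≤ f y := neg_le_of_abs_le (hfA y y.2)
    have h2 : 0 ≤ L * ‖x - (y : EuclideanSpace ℝ (Fin n))‖ ^ θ :=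
      mul_nonneg hL (Real.rpow_nonneg (norm_nonneg _) θ)
    linarith
  have key : ∀ x x', g0 x ≤ g0 x' + L * ‖x - x'‖ ^ θ := by
    intro x x'
    rw [hg0, ← sub_le_iff_le_add]
    refine le_ciInf fun y => ?_
    have h1 : g0 x ≤ f y + L * ‖x - (y : EuclideanSpace ℝ (Fin n))‖ ^ θ := ciInf_le (hbdd x) y
    have h3 : ‖x - (y : EuclideanSpace ℝ (Fin n))‖ ≤ ‖x - x'‖ + ‖x' - (y : EuclideanSpace ℝ (Fin n))‖ := by
      have := dist_triangle x x' (y : EuclideanSpace ℝ (Fin n))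
      simpa [dist_eq_norm] using this
    have h2 : ‖x - (y : EuclideanSpace ℝ (Fin n))‖ ^ θ ≤
        ‖x' - (y : EuclideanSpace ℝ (Fin n))‖ ^ θ + ‖x - x'‖ ^ θ := by
      calc ‖x - (y : EuclideanSpace ℝ (Fin n))‖ ^ θ
          ≤ (‖x - x'‖ + ‖x' - (y : EuclideanSpace ℝ (Fin n))‖) ^ θ :=
            Real.rpow_le_rpow (norm_nonneg _) h3 hθ0.le
        _ ≤ ‖x - x'‖ ^ θ + ‖x' - (y : EuclideanSpace ℝ (Fin n))‖ ^ θ :=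
            rpow_subadd' (norm_nonneg _) (norm_nonneg _) hθ0.le hθ1
        _ = _ := by ring
    nlinarith [mul_le_mul_of_nonneg_left h2 hL]
  have hgH0 : ∀ x y, |g0 x - g0 y| ≤ L * ‖x - y‖ ^ θ := by
    intro x y
    rw [abs_sub_le_iff]
    constructor
    · have := key x y; linarith
    · have := key y x; rw [norm_sub_rev] at this; linarith
  have hg0f : ∀ x ∈ Ω, g0 x = f x := by
    intro x hx
    refine le_antisymm ?_ ?_
    · have := ciInf_le (hbdd x) (⟨x, hx⟩ : Ω)
      simpa [Real.zero_rpow hθ0.ne'] using this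
    · refine le_ciInf fun y => ?_
      have h1 := hfL x hx y y.2
      have h2 : f x - f y ≤ L * ‖x - (y : EuclideanSpace ℝ (Fin n))‖ ^ θ :=
        (le_abs_self _).trans h1
      linarith
  refine ⟨fun x => max (-A) (min A (g0 x)), ?_, ?_, ?_, ?_⟩
  · -- continuity
    have hgH : ∀ x y, |max (-A) (min A (g0 x)) - max (-A) (min A (g0 y))| ≤ L * ‖x - y‖ ^ θ := by
      intro x y
      have hmax : |max (-A) (min A (g0 x)) - max (-A) (min A (g0 y))| ≤ |min A (g0 x) - min A (g0 y)| := by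
        rw [max_comm (-A) (min A (g0 x)), max_comm (-A) (min A (g0 y))]
        exact abs_max_sub_max_le_abs _ _ _
      have hmin : |min A (g0 x) - min A (g0 y)| ≤ |g0 x - g0 y| := by
        have := abs_min_sub_min_le_max A (g0 x) A (g0 y)
        simpa using this
      exact hmax.trans (hmin.trans (hgH0 x y))
    rw [continuous_iff_continuousAt]
    intro x
    have h1 : Tendsto (fun y : EuclideanSpace ℝ (Fin n) => ‖y - x‖) (𝓝 x) (𝓝 0) := by
      simpa using tendsto_norm_sub_self x
    have h3 : ContinuousAt (fun t : ℝ => t ^ θ) 0 := Real.continuousAt_rpow_const 0 θ (Or.inr hθ0.le)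
    have h2 : Tendsto (fun t : ℝ => L * t ^ θ) (𝓝 0) (𝓝 0) := by
      have := (h3.tendsto).const_mul L
      simpa [Real.zero_rpow hθ0.ne'] using this
    have h0 : Tendsto (fun y : EuclideanSpace ℝ (Fin n) => L * ‖y - x‖ ^ θ) (𝓝 x) (𝓝 0) :=
      h2.comp h1
    have hsq : Tendsto (fun y : EuclideanSpace ℝ (Fin n) =>
        |max (-A) (min A (g0 y)) - max (-A) (min A (g0 x))|) (𝓝 x) (𝓝 0) :=
      squeeze_zero (fun y => abs_nonneg _) (fun y => hgH y x) h0
    rw [ContinuousAt, tendsto_iff_dist_tendsto_zero]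
    simpa [Real.dist_eq] using hsq
  · intro x
    rw [abs_le]
    constructor
    · exact le_max_left _ _
    · exact max_le (by linarith) (min_le_left _ _)
  · intro x y
    have hmax : |max (-A) (min A (g0 x)) - max (-A) (min A (g0 y))| ≤ |min A (g0 x) - min A (g0 y)| := by
      rw [max_comm (-A) (min A (g0 x)), max_comm (-A) (min A (g0 y))]
      exact abs_max_sub_max_le_abs _ _ _
    have hmin : |min A (g0 x) - min A (g0 y)| ≤ |g0 x - g0 y| := by
      have := abs_min_sub_min_le_max A (g0 x) A (g0 y)
      simpa using this
    exact hmax.trans (hmin.trans (hgH0 x y))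
  · intro x hx
    show -A ⊔ A ⊓ g0 x = f x
    rw [hg0f x hx]
    have h1 := abs_le.1 (hfA x hx)
    rw [min_eq_right h1.2, max_eq_right h1.1]

lemma key_deriv {n : ℕ} (v g : EuclideanSpace ℝ (Fin n) → ℝ)
    (hv : ContDiff ℝ 1 v) (hvs : HasCompactSupport v)
    (hg : Continuous g) (A : ℝ) (hgA : ∀ x, |g x| ≤ A) (e : EuclideanSpace ℝ (Fin n)) :
    HasDerivAt (fun t : ℝ => ∫ x, g x * v (x + t • e)) (∫ x, g x * fderiv ℝ v x e) 0 := by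
  obtain ⟨M, hM⟩ := (hvs.fderiv ℝ).exists_bound_of_continuous (hv.continuous_fderiv one_ne_zero)
  set S : Set (EuclideanSpace ℝ (Fin n)) :=
    tsupport v + closedBall (0 : EuclideanSpace ℝ (Fin n)) ‖e‖ with hS
  have hScomp : IsCompact S := IsCompact.add hvs (isCompact_closedBall _ _)
  have hSmeas : MeasurableSet S := hScomp.isClosed.measurableSet
  have hmemS : ∀ (x : EuclideanSpace ℝ (Fin n)) (t : ℝ), |t| ≤ 1 →
      x + t • e ∈ tsupport v → x ∈ S := by
    intro x t ht h1
    have h2 : -(t • e) ∈ closedBall (0 : EuclideanSpace ℝ (Fin n)) ‖e‖ := by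
      rw [mem_closedBall_zero_iff, norm_neg, norm_smul]
      calc ‖t‖ * ‖e‖ ≤ 1 * ‖e‖ := by
            apply mul_le_mul_of_nonneg_right _ (norm_nonneg e)
            simpa [Real.norm_eq_abs] using ht
        _ = ‖e‖ := one_mul _
    have h3 : x = (x + t • e) + -(t • e) := by abel
    rw [hS, h3]
    exact Set.add_mem_add h1 h2
  have hmem : ∀ (x : EuclideanSpace ℝ (Fin n)) (t : ℝ), |t| ≤ 1 → x ∉ S →
      fderiv ℝ v (x + t • e) = 0 := by
    intro x t ht hx
    by_contra h
    exact hx (hmemS x t ht (support_fderiv_subset ℝ (Function.mem_support.2 h)))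
  have hA0 : 0 ≤ A := le_trans (abs_nonneg _) (hgA 0)
  have hint : Integrable (fun x => g x * v (x + (0:ℝ) • e)) := by
    have h1 : Integrable (fun x => g x * v x) := by
      apply Continuous.integrable_of_hasCompactSupport (hg.mul hv.continuous)
      exact hvs.mul_left
    refine h1.congr (Eventually.of_forall fun x => ?_)
    simp
  have hmeas : AEStronglyMeasurable (fun x => g x * fderiv ℝ v (x + (0:ℝ) • e) e) volume :=
    (hg.mul (((hv.continuous_fderiv one_ne_zero).comp
      (continuous_id.add continuous_const)).clm_apply continuous_const)).aestronglyMeasurable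
  have hbound : ∀ᵐ x ∂(volume : Measure (EuclideanSpace ℝ (Fin n))), ∀ t ∈ ball (0:ℝ) 1,
      ‖g x * fderiv ℝ v (x + t • e) e‖ ≤ S.indicator (fun _ => A * (M * ‖e‖)) x := by
    refine Eventually.of_forall fun x t ht => ?_
    have ht1 : |t| ≤ 1 := by
      have := mem_ball_iff_norm.1 ht
      simpa [Real.norm_eq_abs] using this.le
    by_cases hx : x ∈ S
    · rw [Set.indicator_of_mem hx]
      have h1 : ‖fderiv ℝ v (x + t • e) e‖ ≤ M * ‖e‖ :=
        le_trans ((fderiv ℝ v (x + t • e)).le_opNorm e)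
          (mul_le_mul_of_nonneg_right (hM _) (norm_nonneg e))
      calc ‖g x * fderiv ℝ v (x + t • e) e‖ = |g x| * ‖fderiv ℝ v (x + t • e) e‖ := by
            rw [norm_mul]; rfl
        _ ≤ A * (M * ‖e‖) := mul_le_mul (hgA x) h1 (norm_nonneg _) hA0
    · rw [Set.indicator_of_notMem hx, hmem x t ht1 hx]
      simp
  have hboundint : Integrable (S.indicator fun _ => A * (M * ‖e‖)) := by
    rw [integrable_indicator_iff hSmeas]
    exact integrableOn_const hScomp.measure_lt_top.ne
  have hdiff : ∀ᵐ x ∂(volume : Measure (EuclideanSpace ℝ (Fin n))), ∀ t ∈ ball (0:ℝ) 1,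
      HasDerivAt (fun s : ℝ => g x * v (x + s • e)) (g x * fderiv ℝ v (x + t • e) e) t := by
    refine Eventually.of_forall fun x t _ => ?_
    have h1 : HasDerivAt (fun s : ℝ => x + s • e) e t := by
      simpa using ((hasDerivAt_id t).smul_const e).const_add x
    have h2 : HasFDerivAt v (fderiv ℝ v (x + t • e)) (x + t • e) :=
      (hv.differentiable one_ne_zero (x + t • e)).hasFDerivAt
    exact (h2.comp_hasDerivAt t h1).const_mul (g x)
  have hres := hasDerivAt_integral_of_dominated_loc_of_deriv_le (μ := volume)
    (F := fun t x => g x * v (x + t • e))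
    (F' := fun t x => g x * fderiv ℝ v (x + t • e) e)
    (x₀ := (0:ℝ)) (bound := S.indicator fun _ => A * (M * ‖e‖))
    (s := ball (0:ℝ) 1) (ball_mem_nhds _ one_pos)
    (Eventually.of_forall fun t =>
      ((hg.mul (hv.continuous.comp (continuous_id.add continuous_const)) :
        Continuous fun x => g x * v (x + t • e))).aestronglyMeasurable)
    hint hmeas hbound hboundint hdiff
  have h := hres.2
  simp only [zero_smul, add_zero] at h
  exact h

lemma integral_pd_eq_zero {n : ℕ} (v : EuclideanSpace ℝ (Fin n) → ℝ)
    (hv : ContDiff ℝ 1 v) (hvs : HasCompactSupport v) (e : EuclideanSpace ℝ (Fin n)) :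
    ∫ x, fderiv ℝ v x e = 0 := by
  have h := key_deriv v (fun _ => 1) hv hvs continuous_const 1 (by simp) e
  have hconst : (fun t : ℝ => ∫ x, (1:ℝ) * v (x + t • e)) = fun _ : ℝ => ∫ x, v x := by
    funext t
    simp only [one_mul]
    exact integral_add_right_eq_self v (t • e)
  rw [hconst] at h
  have h2 := (hasDerivAt_const (0:ℝ) (∫ x, v x)).unique h
  simpa using h2.symm

set_option maxHeartbeats 2000000 in
lemma bilinear_bound {n : ℕ} {θ : ℝ} (hθ : 1/2 < θ) (hθ1 : θ ≤ 1)
    (ψ g : EuclideanSpace ℝ (Fin n) → ℝ)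
    (hψ : ContDiff ℝ 1 ψ) (hψs : HasCompactSupport ψ)
    {Lψ : ℝ} (hLψ0 : 0 ≤ Lψ) (hψL : ∀ x y, |ψ x - ψ y| ≤ Lψ * ‖x - y‖ ^ θ)
    (hg : Continuous g) {A L : ℝ} (hA0 : 0 ≤ A) (hL0 : 0 ≤ L)
    (hgA : ∀ x, |g x| ≤ A) (hgL : ∀ x y, |g x - g y| ≤ L * ‖x - y‖ ^ θ)
    (e : EuclideanSpace ℝ (Fin n)) (he : ‖e‖ = 1)
    {R : ℝ} (hR : 0 ≤ R) (hsupp : tsupport ψ ⊆ closedBall 0 R) :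
    |∫ x, g x * fderiv ℝ ψ x e| ≤
      (A + ((1/2:ℝ) ^ (θ + θ - 1) / (2 * (1 - (1/2:ℝ) ^ (θ + θ - 1)))) * L) * Lψ *
        (volume (closedBall (0 : EuclideanSpace ℝ (Fin n)) (R+1))).toReal := by
  classical
  set B : Set (EuclideanSpace ℝ (Fin n)) := closedBall 0 (R+1) with hB
  set V : ℝ := (volume B).toReal with hVdef
  have hV0 : 0 ≤ V := ENNReal.toReal_nonneg
  have hVfin : volume B < ⊤ := measure_closedBall_lt_top
  set r : ℝ := (1/2:ℝ) ^ (θ + θ - 1) with hrdef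
  have hr0 : 0 < r := Real.rpow_pos_of_pos (by norm_num) _
  have hr1 : r < 1 := Real.rpow_lt_one (by norm_num) (by norm_num) (by linarith)
  set F : ℝ → ℝ := fun t => ∫ x, g x * ψ (x + t • e) with hF
  set d : ℝ := ∫ x, g x * fderiv ℝ ψ x e with hd
  have hderiv : HasDerivAt F d 0 := key_deriv ψ g hψ hψs hg A hgA e
  -- integrability helpers
  have hIntg : ∀ (G : EuclideanSpace ℝ (Fin n) → ℝ), Continuous G →
      ∀ b, Integrable (fun x => G x * ψ (x + b)) := by
    intro G hG b
    apply Continuous.integrable_of_hasCompactSupport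
      (hG.mul (hψ.continuous.comp (continuous_id.add continuous_const)))
    exact (hψs.comp_homeomorph (Homeomorph.addRight b)).mul_left
  have hIntg' : ∀ (G : EuclideanSpace ℝ (Fin n) → ℝ), Continuous G →
      Integrable (fun x => G x * ψ x) := fun G hG =>
    Continuous.integrable_of_hasCompactSupport (hG.mul hψ.continuous) hψs.mul_left
  -- vanishing outside B
  have hzero : ∀ (t : ℝ), |t| ≤ 1 → ∀ x ∉ B, ψ (x + t • e) = 0 := by
    intro t ht x hx
    apply image_eq_zero_of_notMem_tsupport
    intro hmem
    apply hx
    have h1 : ‖x + t • e‖ ≤ R := mem_closedBall_zero_iff.1 (hsupp hmem)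
    have h2 : ‖x‖ ≤ ‖x + t • e‖ + ‖t • e‖ := by
      calc ‖x‖ = ‖(x + t • e) + (-(t • e))‖ := by congr 1; abel
        _ ≤ ‖x + t • e‖ + ‖-(t • e)‖ := norm_add_le _ _
        _ = ‖x + t • e‖ + ‖t • e‖ := by rw [norm_neg]
    have h3 : ‖t • e‖ ≤ 1 := by
      rw [norm_smul, he, mul_one, Real.norm_eq_abs]; exact ht
    rw [hB, mem_closedBall_zero_iff]
    linarith
  have hzero' : ∀ x ∉ B, ψ x = 0 := by
    intro x hx
    apply image_eq_zero_of_notMem_tsupport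
    intro hmem
    apply hx
    have h1 : ‖x‖ ≤ R := mem_closedBall_zero_iff.1 (hsupp hmem)
    rw [hB, mem_closedBall_zero_iff]
    linarith
  -- second difference bound
  have hT : ∀ u : ℝ, 0 < u → u ≤ 1 →
      |F (2*u) - 2 * F u + F 0| ≤ L * u ^ θ * (Lψ * u ^ θ) * V := by
    intro u hu0 hu1
    have hue : ‖u • e‖ = u := by
      rw [norm_smul, he, mul_one, Real.norm_eq_abs, abs_of_pos hu0]
    have I1 : Integrable (fun x => g (x - u • e) * ψ (x + u • e)) :=
      hIntg _ (hg.comp (continuous_id.sub continuous_const)) _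
    have I2 : Integrable (fun x => g x * ψ (x + u • e)) := hIntg _ hg _
    have I3 : Integrable (fun x => g (x - u • e) * ψ x) :=
      hIntg' _ (hg.comp (continuous_id.sub continuous_const))
    have I4 : Integrable (fun x => g x * ψ x) := hIntg' _ hg
    have e1 : F (2*u) = ∫ x, g (x - u • e) * ψ (x + u • e) := by
      have h1 := integral_add_right_eq_self (μ := volume)
        (fun x => g (x - u • e) * ψ (x + u • e)) (u • e)
      rw [← h1]
      show (∫ x, g x * ψ (x + (2*u) • e)) = ∫ x, g (x + u • e - u • e) * ψ (x + u • e + u • e)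
      congr 1
      funext x
      have h2 : x + u • e - u • e = x := by abel
      have h3 : x + u • e + u • e = x + (2*u) • e := by
        rw [two_mul, add_smul]; abel
      rw [h2, h3]
    have e2 : (∫ x, g x * ψ (x + u • e)) = ∫ x, g (x - u • e) * ψ x := by
      have h1 := integral_add_right_eq_self (μ := volume) (fun x => g (x - u • e) * ψ x) (u • e)
      rw [← h1]
      congr 1
      funext x
      have h2 : x + u • e - u • e = x := by abel
      rw [h2]
    have e0 : F 0 = ∫ x, g x * ψ x := by
      show (∫ x, g x * ψ (x + (0:ℝ) • e)) = _
      congr 1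
      funext x
      rw [zero_smul, add_zero]
    have h5 : (∫ x, (g (x - u • e) * ψ (x + u • e) - g x * ψ (x + u • e))) =
        (∫ x, g (x - u • e) * ψ (x + u • e)) - ∫ x, g x * ψ (x + u • e) := integral_sub I1 I2
    have h6 : (∫ x, (g (x - u • e) * ψ x - g x * ψ x)) =
        (∫ x, g (x - u • e) * ψ x) - ∫ x, g x * ψ x := integral_sub I3 I4
    have h7 : (∫ x, ((g (x - u • e) * ψ (x + u • e) - g x * ψ (x + u • e)) -
          (g (x - u • e) * ψ x - g x * ψ x))) =
        (∫ x, (g (x - u • e) * ψ (x + u • e) - g x * ψ (x + u • e))) -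
          ∫ x, (g (x - u • e) * ψ x - g x * ψ x) := integral_sub (I1.sub I2) (I3.sub I4)
    have hexp : (∫ x, (g (x - u • e) - g x) * (ψ (x + u • e) - ψ x)) =
        (∫ x, g (x - u • e) * ψ (x + u • e)) - (∫ x, g x * ψ (x + u • e)) -
          ((∫ x, g (x - u • e) * ψ x) - ∫ x, g x * ψ x) := by
      calc (∫ x, (g (x - u • e) - g x) * (ψ (x + u • e) - ψ x))
          = ∫ x, ((g (x - u • e) * ψ (x + u • e) - g x * ψ (x + u • e)) -
              (g (x - u • e) * ψ x - g x * ψ x)) := by congr 1; funext x; ring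
        _ = _ := by rw [h7, h5, h6]
    have hiden : F (2*u) - 2 * F u + F 0 =
        ∫ x, (g (x - u • e) - g x) * (ψ (x + u • e) - ψ x) := by
      have hFu : F u = ∫ x, g x * ψ (x + u • e) := rfl
      rw [hexp, e1, e0, hFu, e2]
      ring
    rw [hiden]
    have hcont : Continuous fun x => (g (x - u • e) - g x) * (ψ (x + u • e) - ψ x) := by
      apply Continuous.mul
      · exact (hg.comp (continuous_id.sub continuous_const)).sub hg
      · exact (hψ.continuous.comp (continuous_id.add continuous_const)).sub hψ.continuous
    have hcomp : ∀ x ∉ B, (g (x - u • e) - g x) * (ψ (x + u • e) - ψ x) = 0 := by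
      intro x hx
      rw [hzero u (by rw [abs_of_pos hu0]; exact hu1) x hx]
      rw [hzero' x hx]
      ring
    rw [← setIntegral_eq_integral_of_forall_compl_eq_zero hcomp]
    have hbd : ∀ x ∈ B, ‖(g (x - u • e) - g x) * (ψ (x + u • e) - ψ x)‖ ≤
        L * u ^ θ * (Lψ * u ^ θ) := by
      intro x _
      rw [Real.norm_eq_abs, abs_mul]
      have hb1 : |g (x - u • e) - g x| ≤ L * u ^ θ := by
        have := hgL (x - u • e) x
        have h2 : ‖x - u • e - x‖ = u := by
          rw [show x - u • e - x = -(u • e) by abel, norm_neg, hue]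
        rwa [h2] at this
      have hb2 : |ψ (x + u • e) - ψ x| ≤ Lψ * u ^ θ := by
        have := hψL (x + u • e) x
        have h2 : ‖x + u • e - x‖ = u := by
          rw [show x + u • e - x = u • e by abel, hue]
        rwa [h2] at this
      have hx1 : (0:ℝ) ≤ L * u ^ θ :=
        mul_nonneg hL0 (Real.rpow_nonneg hu0.le θ)
      exact mul_le_mul hb1 hb2 (abs_nonneg _) hx1
    calc |∫ x in B, (g (x - u • e) - g x) * (ψ (x + u • e) - ψ x)|
        ≤ L * u ^ θ * (Lψ * u ^ θ) * (volume B).toReal :=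
          norm_setIntegral_le_of_norm_le_const hVfin hbd
      _ = L * u ^ θ * (Lψ * u ^ θ) * V := by rw [hVdef]
  -- the dyadic sequence
  set u : ℕ → ℝ := fun m => (1/2:ℝ) ^ m with hu
  have hupos : ∀ m, 0 < u m := fun m => by positivity
  have hule1 : ∀ m, u m ≤ 1 := fun m => pow_le_one₀ (by norm_num) (by norm_num)
  have hurec : ∀ m, u m = 2 * u (m+1) := by
    intro m
    rw [hu]
    show (1/2:ℝ)^m = 2 * (1/2:ℝ)^(m+1)
    rw [pow_succ]
    ring
  set Q : ℕ → ℝ := fun m => (F (u m) - F 0) / u m with hQ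
  have hrpow : ∀ m : ℕ, (u m) ^ (θ + θ - 1) = r ^ m := by
    intro m
    rw [hu, hrdef]
    show ((1/2:ℝ)^(m:ℕ)) ^ (θ + θ - 1) = ((1/2:ℝ) ^ (θ + θ - 1)) ^ (m:ℕ)
    rw [← Real.rpow_natCast (1/2:ℝ) m, ← Real.rpow_mul (by norm_num),
      ← Real.rpow_natCast ((1/2:ℝ) ^ (θ + θ - 1)) m, ← Real.rpow_mul (by norm_num),
      mul_comm]
  have hstep : ∀ m, |Q m - Q (m+1)| ≤ (L * Lψ * V / 2) * r ^ (m+1) := by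
    intro m
    have hu' := hupos (m+1)
    have hQrw : Q m - Q (m+1) = (F (2 * u (m+1)) - 2 * F (u (m+1)) + F 0) / (2 * u (m+1)) := by
      rw [hQ]
      show (F (u m) - F 0) / u m - (F (u (m+1)) - F 0) / u (m+1) = _
      rw [hurec m]
      field_simp
      ring
    rw [hQrw, abs_div, abs_of_pos (by linarith : (0:ℝ) < 2 * u (m+1))]
    rw [div_le_iff₀ (by linarith : (0:ℝ) < 2 * u (m+1))]
    calc |F (2 * u (m+1)) - 2 * F (u (m+1)) + F 0|
        ≤ L * (u (m+1)) ^ θ * (Lψ * (u (m+1)) ^ θ) * V :=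
          hT (u (m+1)) hu' (hule1 (m+1))
      _ = (L * Lψ * V / 2) * r ^ (m+1) * (2 * u (m+1)) := by
          have h1 : (u (m+1)) ^ θ * (u (m+1)) ^ θ = (u (m+1)) ^ (θ + θ) :=
            (Real.rpow_add hu' θ θ).symm
          have h2 : (u (m+1)) ^ (θ + θ) = (u (m+1)) ^ (θ + θ - 1) * u (m+1) := by
            have h2' := Real.rpow_add hu' (θ + θ - 1) 1
            rw [Real.rpow_one] at h2'
            rw [show θ + θ - 1 + 1 = θ + θ by ring] at h2'
            exact h2'
          have h3 := hrpow (m+1)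
          calc L * (u (m+1)) ^ θ * (Lψ * (u (m+1)) ^ θ) * V
              = L * Lψ * V * ((u (m+1)) ^ θ * (u (m+1)) ^ θ) := by ring
            _ = L * Lψ * V * ((u (m+1)) ^ (θ + θ - 1) * u (m+1)) := by rw [h1, h2]
            _ = L * Lψ * V * (r ^ (m+1) * u (m+1)) := by rw [h3]
            _ = (L * Lψ * V / 2) * r ^ (m+1) * (2 * u (m+1)) := by ring
  have hc0 : 0 ≤ L * Lψ * V / 2 := by positivity
  have htel : ∀ M, |Q 0 - Q M| ≤ (L * Lψ * V / 2) * ((r - r ^ (M+1)) / (1 - r)) := by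
    intro M
    induction M with
    | zero => simp [pow_one]
    | succ M ih =>
      have h1 : |Q 0 - Q (M+1)| ≤ |Q 0 - Q M| + |Q M - Q (M+1)| := by
        calc |Q 0 - Q (M+1)| = |(Q 0 - Q M) + (Q M - Q (M+1))| := by ring_nf
          _ ≤ _ := abs_add_le _ _
      have h2 := hstep M
      have h3 : (L * Lψ * V / 2) * ((r - r ^ (M+1)) / (1 - r)) + (L * Lψ * V / 2) * r ^ (M+1)
          = (L * Lψ * V / 2) * ((r - r ^ (M+1+1)) / (1 - r)) := by
        have hne : (1:ℝ) - r ≠ 0 := by linarith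
        field_simp
        ring
      linarith
  have htel' : ∀ M, |Q 0 - Q M| ≤ (L * Lψ * V / 2) * (r / (1 - r)) := by
    intro M
    refine (htel M).trans ?_
    apply mul_le_mul_of_nonneg_left _ hc0
    rw [div_le_div_iff_of_pos_right (by linarith : (0:ℝ) < 1 - r)]
    nlinarith [pow_nonneg hr0.le (M+1)]
  have hlim : Tendsto Q atTop (𝓝 d) := by
    have hslope := hasDerivAt_iff_tendsto_slope.mp hderiv
    have hu0' : Tendsto u atTop (𝓝 0) := by
      rw [hu]
      exact tendsto_pow_atTop_nhds_zero_of_lt_one (by norm_num) (by norm_num)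
    have hu'' : Tendsto u atTop (𝓝[≠] (0:ℝ)) :=
      tendsto_nhdsWithin_of_tendsto_nhds_of_eventually_within _ hu0'
        (Eventually.of_forall fun m => (hupos m).ne')
    have h1 : Tendsto (fun M => slope F 0 (u M)) atTop (𝓝 d) := hslope.comp hu''
    refine h1.congr fun M => ?_
    rw [slope_def_field, sub_zero]
  have hQd : |Q 0 - d| ≤ (L * Lψ * V / 2) * (r / (1 - r)) := by
    have h1 : Tendsto (fun M => |Q 0 - Q M|) atTop (𝓝 |Q 0 - d|) :=
      (tendsto_const_nhds.sub hlim).abs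
    exact le_of_tendsto h1 (Eventually.of_forall htel')
  have hQ0 : |Q 0| ≤ A * Lψ * V := by
    have hQ0eq : Q 0 = F 1 - F 0 := by
      rw [hQ]
      show (F (u 0) - F 0) / u 0 = _
      rw [show u 0 = 1 from pow_zero _, div_one]
    have I2 : Integrable (fun x => g x * ψ (x + (1:ℝ) • e)) := hIntg _ hg _
    have I4 : Integrable (fun x => g x * ψ x) := hIntg' _ hg
    have e0 : F 0 = ∫ x, g x * ψ x := by
      show (∫ x, g x * ψ (x + (0:ℝ) • e)) = _
      congr 1
      funext x
      rw [zero_smul, add_zero]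
    have hF1 : F 1 = ∫ x, g x * ψ (x + (1:ℝ) • e) := rfl
    have h5 : (∫ x, (g x * ψ (x + (1:ℝ) • e) - g x * ψ x)) =
        (∫ x, g x * ψ (x + (1:ℝ) • e)) - ∫ x, g x * ψ x := integral_sub I2 I4
    have h5' : Q 0 = ∫ x, g x * (ψ (x + (1:ℝ) • e) - ψ x) := by
      rw [hQ0eq, hF1, e0, ← h5]
      congr 1
      funext x
      ring
    have hcz : ∀ x ∉ B, g x * (ψ (x + (1:ℝ) • e) - ψ x) = 0 := by
      intro x hx
      rw [hzero 1 (by norm_num) x hx, hzero' x hx]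
      ring
    have hbd : ∀ x ∈ B, ‖g x * (ψ (x + (1:ℝ) • e) - ψ x)‖ ≤ A * Lψ := by
      intro x _
      rw [Real.norm_eq_abs, abs_mul]
      have hb2 : |ψ (x + (1:ℝ) • e) - ψ x| ≤ Lψ := by
        have h6 := hψL (x + (1:ℝ) • e) x
        have h7 : ‖x + (1:ℝ) • e - x‖ = 1 := by
          rw [show x + (1:ℝ) • e - x = (1:ℝ) • e by abel, one_smul, he]
        rw [h7, Real.one_rpow, mul_one] at h6
        exact h6
      exact mul_le_mul (hgA x) hb2 (abs_nonneg _) hA0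
    have hcont : Continuous fun x => g x * (ψ (x + (1:ℝ) • e) - ψ x) :=
      hg.mul ((hψ.continuous.comp (continuous_id.add continuous_const)).sub hψ.continuous)
    rw [h5', ← setIntegral_eq_integral_of_forall_compl_eq_zero hcz]
    calc |∫ x in B, g x * (ψ (x + (1:ℝ) • e) - ψ x)|
        ≤ A * Lψ * (volume B).toReal :=
          norm_setIntegral_le_of_norm_le_const hVfin hbd
      _ = A * Lψ * V := by rw [hVdef]
  have hfinal : |d| ≤ A * Lψ * V + (L * Lψ * V / 2) * (r / (1 - r)) := by
    have h1 : |d| ≤ |Q 0| + |Q 0 - d| := by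
      have h2 : d = Q 0 - (Q 0 - d) := by ring
      calc |d| = |Q 0 - (Q 0 - d)| := by rw [← h2]
        _ ≤ |Q 0| + |Q 0 - d| := abs_sub _ _
    linarith
  have heq : A * Lψ * V + (L * Lψ * V / 2) * (r / (1 - r)) =
      (A + r / (2 * (1 - r)) * L) * Lψ * V := by
    have hne : (1:ℝ) - r ≠ 0 := by linarith
    field_simp
  show |d| ≤ (A + r / (2 * (1 - r)) * L) * Lψ * V
  rw [← heq]
  exact hfinal

/-- Partial derivative of `f : ℝⁿ → ℝ` in the `i`-th coordinate direction. -/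
def pd {n : ℕ} (i : Fin n) (f : EuclideanSpace ℝ (Fin n) → ℝ)
    (x : EuclideanSpace ℝ (Fin n)) : ℝ :=
  fderiv ℝ f x (EuclideanSpace.single i 1)

set_option maxHeartbeats 2000000 in
/-- For `n ≥ 1`, `θ ∈ (1/2,1]` and a bounded open set `Ω ⊆ ℝⁿ`, there is a
constant `C = C(n,θ,Ω)` such that for every `i`, all `f, w ∈ C¹(Ω̄)` and every `φ ∈ C¹_c(Ω)`,
`|∫_Ω ∂_i f · w · φ| ≤ C ‖f‖_{C^{0,θ}} ‖w‖_{C^{0,θ}} ‖φ‖_{C^{0,θ}}`; in particular the bound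
does not involve the derivatives of `f`, `w`, `φ`. The `C^{0,θ}` norms are encoded via
arbitrary admissible bounds (`sup ≤ A`, Hölder seminorm ≤ `L`). -/
theorem statement5
    (n : ℕ) (hn : 1 ≤ n) (θ : ℝ) (hθ : 1 / 2 < θ) (hθ1 : θ ≤ 1)
    (Ω : Set (EuclideanSpace ℝ (Fin n))) (hΩo : IsOpen Ω)
    (hΩb : Bornology.IsBounded Ω) (hΩne : Ω.Nonempty) :
    ∃ C : ℝ, 0 < C ∧
      ∀ i : Fin n, ∀ f w φ : EuclideanSpace ℝ (Fin n) → ℝ,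
        ContDiffOn ℝ 1 f (closure Ω) → ContDiffOn ℝ 1 w (closure Ω) →
        ContDiff ℝ 1 φ → HasCompactSupport φ → tsupport φ ⊆ Ω →
      ∀ Af Lf Aw Lw Aφ Lφ : ℝ,
        (∀ x ∈ Ω, |f x| ≤ Af) →
        (∀ x ∈ Ω, ∀ y ∈ Ω, |f x - f y| ≤ Lf * ‖x - y‖ ^ θ) →
        (∀ x ∈ Ω, |w x| ≤ Aw) →
        (∀ x ∈ Ω, ∀ y ∈ Ω, |w x - w y| ≤ Lw * ‖x - y‖ ^ θ) →
        (∀ x, |φ x| ≤ Aφ) →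
        (∀ x y : EuclideanSpace ℝ (Fin n), |φ x - φ y| ≤ Lφ * ‖x - y‖ ^ θ) →
      |∫ x in Ω, pd i f x * w x * φ x| ≤
        C * (Af + Lf) * (Aw + Lw) * (Aφ + Lφ) := by
  have hθpos : (0:ℝ) < θ := by linarith
  -- radius containing Ω
  obtain ⟨R0, hR0⟩ := hΩb.subset_closedBall (0 : EuclideanSpace ℝ (Fin n))
  set R : ℝ := max R0 0 with hRdef
  have hR0' : (0:ℝ) ≤ R := le_max_right _ _
  have hΩR : Ω ⊆ closedBall 0 R := hR0.trans (closedBall_subset_closedBall (le_max_left _ _))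
  set V : ℝ := (volume (closedBall (0 : EuclideanSpace ℝ (Fin n)) (R+1))).toReal with hVdef
  have hV0 : (0:ℝ) ≤ V := ENNReal.toReal_nonneg
  set r : ℝ := (1/2:ℝ) ^ (θ + θ - 1) with hrdef
  have hr0 : 0 < r := Real.rpow_pos_of_pos (by norm_num) _
  have hr1 : r < 1 := Real.rpow_lt_one (by norm_num) (by norm_num) (by linarith)
  set Cθ : ℝ := r / (2 * (1 - r)) with hCθdef
  have hCθ0 : 0 ≤ Cθ := by
    apply div_nonneg hr0.le
    nlinarith
  refine ⟨(1 + Cθ) * V + 1, by positivity, ?_⟩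
  intro i f w φ hf hw hφ hφs hφΩ Af Lf Aw Lw Aφ Lφ hfA hfL hwA hwL hφA hφL
  set e : EuclideanSpace ℝ (Fin n) := EuclideanSpace.single i 1 with hedef
  have he : ‖e‖ = 1 := by simp [hedef, EuclideanSpace.norm_single]
  obtain ⟨x₀, hx₀⟩ := hΩne
  -- nonnegativity of the constants
  have hAf0 : 0 ≤ Af := (abs_nonneg _).trans (hfA x₀ hx₀)
  have hAw0 : 0 ≤ Aw := (abs_nonneg _).trans (hwA x₀ hx₀)
  have hAφ0 : 0 ≤ Aφ := (abs_nonneg _).trans (hφA x₀)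
  have hLφ0 : 0 ≤ Lφ := by
    have h1 := hφL 0 e
    have h2 : ‖(0 : EuclideanSpace ℝ (Fin n)) - e‖ = 1 := by rw [zero_sub, norm_neg, he]
    rw [h2, Real.one_rpow, mul_one] at h1
    exact (abs_nonneg _).trans h1
  obtain ⟨ε, hε0, hεsub⟩ := Metric.isOpen_iff.1 hΩo x₀ hx₀
  have hy₀ : x₀ + (ε/2) • e ∈ Ω := by
    apply hεsub
    rw [mem_ball_iff_norm]
    rw [show x₀ + (ε/2) • e - x₀ = (ε/2) • e by abel]
    rw [norm_smul, he, mul_one, Real.norm_eq_abs, abs_of_pos (by linarith)]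
    linarith
  have hdist : ‖(x₀ + (ε/2) • e) - x₀‖ ^ θ > 0 := by
    rw [show x₀ + (ε/2) • e - x₀ = (ε/2) • e by abel, norm_smul, he, mul_one,
      Real.norm_eq_abs, abs_of_pos (by linarith : (0:ℝ) < ε/2)]
    exact Real.rpow_pos_of_pos (by linarith) θ
  have hLf0 : 0 ≤ Lf := by
    by_contra h
    push_neg at h
    have h1 := hfL (x₀ + (ε/2) • e) hy₀ x₀ hx₀
    nlinarith [abs_nonneg (f (x₀ + (ε/2) • e) - f x₀)]
  have hLw0 : 0 ≤ Lw := by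
    by_contra h
    push_neg at h
    have h1 := hwL (x₀ + (ε/2) • e) hy₀ x₀ hx₀
    nlinarith [abs_nonneg (w (x₀ + (ε/2) • e) - w x₀)]
  -- the product ψ = w * φ
  set ψ : EuclideanSpace ℝ (Fin n) → ℝ := fun x => w x * φ x with hψdef
  have hψsupp : tsupport ψ ⊆ tsupport φ := by
    apply closure_mono
    intro x hx
    simp only [Function.mem_support] at hx ⊢
    exact fun h => hx (by rw [hψdef]; simp [h])
  have hψcs : HasCompactSupport ψ := hφs.mul_left
  have hψc : ContDiff ℝ 1 ψ := by
    rw [contDiff_iff_contDiffAt]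
    intro x
    by_cases hx : x ∈ Ω
    · have hwx : ContDiffAt ℝ 1 w x :=
        hw.contDiffAt (mem_of_superset (hΩo.mem_nhds hx) subset_closure)
      exact hwx.mul hφ.contDiffAt
    · have hx' : x ∉ tsupport φ := fun h => hx (hφΩ h)
      have hev : ψ =ᶠ[𝓝 x] (fun _ => 0) := by
        apply eventually_of_mem ((isClosed_tsupport φ).isOpen_compl.mem_nhds hx')
        intro y hy
        rw [hψdef]
        simp [image_eq_zero_of_notMem_tsupport hy]
      exact (contDiffAt_const (c := (0:ℝ))).congr_of_eventuallyEq hev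
  -- Hölder seminorm of ψ
  set Lψ : ℝ := Aw * Lφ + Aφ * Lw with hLψdef
  have hLψ0 : 0 ≤ Lψ := by positivity
  have hψL : ∀ x y, |ψ x - ψ y| ≤ Lψ * ‖x - y‖ ^ θ := by
    have hkey : ∀ x y, x ∈ Ω → |ψ x - ψ y| ≤ Lψ * ‖x - y‖ ^ θ := by
      intro x y hx
      have hd0 : 0 ≤ ‖x - y‖ ^ θ := Real.rpow_nonneg (norm_nonneg _) θ
      by_cases hy : y ∈ Ω
      · have h1 : ψ x - ψ y = w x * (φ x - φ y) + (w x - w y) * φ y := by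
          rw [hψdef]; ring
        have h2 : |ψ x - ψ y| ≤ |w x * (φ x - φ y)| + |(w x - w y) * φ y| := by
          rw [h1]; exact abs_add_le _ _
        have h3 : |w x * (φ x - φ y)| ≤ Aw * (Lφ * ‖x - y‖ ^ θ) := by
          rw [abs_mul]
          exact mul_le_mul (hwA x hx) (hφL x y) (abs_nonneg _) hAw0
        have h4 : |(w x - w y) * φ y| ≤ (Lw * ‖x - y‖ ^ θ) * Aφ := by
          rw [abs_mul]
          exact mul_le_mul (hwL x hx y hy) (hφA y) (abs_nonneg _)
            (mul_nonneg hLw0 hd0)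
        rw [hLψdef]
        nlinarith
      · have hφy : φ y = 0 :=
          image_eq_zero_of_notMem_tsupport (fun h => hy (hφΩ h))
        have h1 : ψ x - ψ y = w x * (φ x - φ y) := by
          rw [hψdef]
          simp [hφy]
        have h3 : |w x * (φ x - φ y)| ≤ Aw * (Lφ * ‖x - y‖ ^ θ) := by
          rw [abs_mul]
          exact mul_le_mul (hwA x hx) (hφL x y) (abs_nonneg _) hAw0
        rw [h1, hLψdef]
        nlinarith [mul_nonneg (mul_nonneg hAφ0 hLw0) hd0]
    intro x y
    by_cases hx : x ∈ Ω
    · exact hkey x y hx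
    · by_cases hy : y ∈ Ω
      · rw [abs_sub_comm, norm_sub_rev]
        exact hkey y x hy
      · have hφx : φ x = 0 := image_eq_zero_of_notMem_tsupport (fun h => hx (hφΩ h))
        have hφy : φ y = 0 := image_eq_zero_of_notMem_tsupport (fun h => hy (hφΩ h))
        have h1 : ψ x - ψ y = 0 := by rw [hψdef]; simp [hφx, hφy]
        rw [h1, abs_zero]
        positivity
  -- extension of f
  obtain ⟨g, hgc, hgA, hgL, hgf⟩ :=
    exists_holder_extension Ω ⟨x₀, hx₀⟩ hθpos hθ1 f hAf0 hLf0 hfA hfL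
  -- integration by parts
  set u : EuclideanSpace ℝ (Fin n) → ℝ := fun x => f x * ψ x with hudef
  have hucs : HasCompactSupport u := hψcs.mul_left
  have husupp : tsupport u ⊆ tsupport ψ := by
    apply closure_mono
    intro x hx
    simp only [Function.mem_support] at hx ⊢
    exact fun h => hx (by rw [hudef]; simp [h])
  have huc : ContDiff ℝ 1 u := by
    rw [contDiff_iff_contDiffAt]
    intro x
    by_cases hx : x ∈ Ω
    · have hfx : ContDiffAt ℝ 1 f x :=
        hf.contDiffAt (mem_of_superset (hΩo.mem_nhds hx) subset_closure)
      exact hfx.mul hψc.contDiffAt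
    · have hx' : x ∉ tsupport ψ := fun h => hx (hφΩ (hψsupp h))
      have hev : u =ᶠ[𝓝 x] (fun _ => 0) := by
        apply eventually_of_mem ((isClosed_tsupport ψ).isOpen_compl.mem_nhds hx')
        intro y hy
        rw [hudef]
        simp [image_eq_zero_of_notMem_tsupport hy]
      exact (contDiffAt_const (c := (0:ℝ))).congr_of_eventuallyEq hev
  have hzero_int : ∫ x, fderiv ℝ u x e = 0 := integral_pd_eq_zero u huc hucs e
  have h_eq : ∀ x ∈ Ω, fderiv ℝ u x e = pd i f x * ψ x + f x * fderiv ℝ ψ x e := by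
    intro x hx
    have hfd : DifferentiableAt ℝ f x :=
      (hf.contDiffAt (mem_of_superset (hΩo.mem_nhds hx) subset_closure)).differentiableAt one_ne_zero
    have hψd : DifferentiableAt ℝ ψ x := (hψc.differentiable one_ne_zero) x
    have h1 : fderiv ℝ u x = f x • fderiv ℝ ψ x + ψ x • fderiv ℝ f x := fderiv_mul hfd hψd
    rw [h1]
    simp only [ContinuousLinearMap.add_apply, ContinuousLinearMap.smul_apply, smul_eq_mul]
    rw [pd, hedef]
    ring
  have hUzero : ∀ x ∉ Ω, fderiv ℝ u x e = 0 := by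
    intro x hx
    have hx' : x ∉ tsupport u := fun h => hx (hφΩ (hψsupp (husupp h)))
    have h1 : fderiv ℝ u x = 0 := by
      by_contra h
      exact hx' (support_fderiv_subset ℝ (Function.mem_support.2 h))
    rw [h1]
    rfl
  have hψez : ∀ x ∉ Ω, fderiv ℝ ψ x e = 0 := by
    intro x hx
    have hx' : x ∉ tsupport ψ := fun h => hx (hφΩ (hψsupp h))
    have h1 : fderiv ℝ ψ x = 0 := by
      by_contra h
      exact hx' (support_fderiv_subset ℝ (Function.mem_support.2 h))
    rw [h1]
    rfl
  have hUcont : Continuous fun x => fderiv ℝ u x e :=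
    (huc.continuous_fderiv one_ne_zero).clm_apply continuous_const
  have hUcs : HasCompactSupport fun x => fderiv ℝ u x e := hucs.fderiv_apply ℝ e
  have hUint : Integrable (fun x => fderiv ℝ u x e) :=
    hUcont.integrable_of_hasCompactSupport hUcs
  have hgψcont : Continuous fun x => g x * fderiv ℝ ψ x e :=
    hgc.mul ((hψc.continuous_fderiv one_ne_zero).clm_apply continuous_const)
  have hgψcs : HasCompactSupport fun x => g x * fderiv ℝ ψ x e :=
    (hψcs.fderiv_apply ℝ e).mul_left
  have hgψint : Integrable (fun x => g x * fderiv ℝ ψ x e) :=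
    hgψcont.integrable_of_hasCompactSupport hgψcs
  have hI2 : IntegrableOn (fun x => f x * fderiv ℝ ψ x e) Ω := by
    apply MeasureTheory.IntegrableOn.congr_fun hgψint.integrableOn _ hΩo.measurableSet
    intro x hx
    show g x * fderiv ℝ ψ x e = f x * fderiv ℝ ψ x e
    rw [hgf x hx]
  have hI1 : IntegrableOn (fun x => pd i f x * ψ x) Ω := by
    apply MeasureTheory.IntegrableOn.congr_fun ((hUint.integrableOn).sub hI2) _
      hΩo.measurableSet
    intro x hx
    show fderiv ℝ u x e - f x * fderiv ℝ ψ x e = pd i f x * ψ x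
    have := h_eq x hx
    linarith
  have E1 : (∫ x in Ω, fderiv ℝ u x e) = 0 := by
    rw [setIntegral_eq_integral_of_forall_compl_eq_zero hUzero]
    exact hzero_int
  have E2 : (∫ x in Ω, fderiv ℝ u x e) =
      (∫ x in Ω, pd i f x * ψ x) + ∫ x in Ω, f x * fderiv ℝ ψ x e := by
    rw [setIntegral_congr_fun hΩo.measurableSet h_eq]
    exact integral_add hI1 hI2
  have E3 : (∫ x in Ω, f x * fderiv ℝ ψ x e) = ∫ x, g x * fderiv ℝ ψ x e := by
    have h1 : (∫ x in Ω, f x * fderiv ℝ ψ x e) = ∫ x in Ω, g x * fderiv ℝ ψ x e := by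
      apply setIntegral_congr_fun hΩo.measurableSet
      intro x hx
      show f x * fderiv ℝ ψ x e = g x * fderiv ℝ ψ x e
      rw [hgf x hx]
    rw [h1]
    apply setIntegral_eq_integral_of_forall_compl_eq_zero
    intro x hx
    rw [hψez x hx]
    ring
  have Etarget : (∫ x in Ω, pd i f x * w x * φ x) = ∫ x in Ω, pd i f x * ψ x := by
    apply setIntegral_congr_fun hΩo.measurableSet
    intro x _
    rw [hψdef]
    ring
  have Emain : (∫ x in Ω, pd i f x * w x * φ x) = -(∫ x, g x * fderiv ℝ ψ x e) := by
    rw [Etarget, ← E3]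
    linarith [E1, E2]
  -- apply the bilinear bound
  have hbil := bilinear_bound hθ hθ1 ψ g hψc hψcs hLψ0 hψL hgc hAf0 hLf0 hgA hgL e he
    hR0' (hψsupp.trans (hφΩ.trans hΩR))
  rw [Emain, abs_neg]
  rw [← hrdef, ← hVdef, ← hCθdef] at hbil
  -- final arithmetic
  calc |∫ x, g x * fderiv ℝ ψ x e|
      ≤ (Af + Cθ * Lf) * Lψ * V := hbil
    _ ≤ ((1 + Cθ) * (Af + Lf)) * Lψ * V := by
        apply mul_le_mul_of_nonneg_right _ hV0
        apply mul_le_mul_of_nonneg_right _ hLψ0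
        nlinarith
    _ ≤ ((1 + Cθ) * (Af + Lf)) * ((Aw + Lw) * (Aφ + Lφ)) * V := by
        apply mul_le_mul_of_nonneg_right _ hV0
        apply mul_le_mul_of_nonneg_left _ (by positivity : (0:ℝ) ≤ (1 + Cθ) * (Af + Lf))
        rw [hLψdef]
        nlinarith
    _ ≤ ((1 + Cθ) * V + 1) * (Af + Lf) * (Aw + Lw) * (Aφ + Lφ) := by
        have hre : ((1 + Cθ) * V + 1) * (Af + Lf) * (Aw + Lw) * (Aφ + Lφ) =
            ((1 + Cθ) * (Af + Lf)) * ((Aw + Lw) * (Aφ + Lφ)) * V +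
              (Af + Lf) * ((Aw + Lw) * (Aφ + Lφ)) := by ring
        have hnn : (0:ℝ) ≤ (Af + Lf) * ((Aw + Lw) * (Aφ + Lφ)) := by positivity
        linarith
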